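/- For all integers q ≥ 2 and d ≥ 3, the function ζ_{q,d} is continuously differentiable on the closed interval [−1/(q−1), 1], and its derivative is strictly positive at every point of the open interval (−1/(q−1), 1). -/

import Mathlib

open Real Set Filter Polynomial
open scoped Classical

/-- The function `ζ_{q,d}`, extended by continuity at `ẑ = -1` when `q = 2` and `d` is odd. -/
noncomputable def zetaF (q d : ℕ) (z : ℝ) : ℝ :=
  if q = 2 ∧ Odd d ∧ z = -1 then 2 / (d : ℝ) - 1
  else (z + z ^ (d - 1) + ((q : ℝ) - 2) * z ^ d) / (1 + ((q : ℝ) - 1) * z ^ d)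

open Finset in
lemma H_pos (k : ℕ) (y : ℝ) (h0 : 0 ≤ y) (h1 : y < 1) :
    ((k:ℝ)+2)*y^(k+1)*(1-y^2) < 1 - y^(2*k+4) := by
  set S := ∑ i ∈ range (k+2), (y^2)^i with hSdef
  have hS : (1 - y^2) * S = 1 - y^(2*k+4) := by
    have := geom_sum_mul (y^2) (k+2)
    have h2 : (y^2)^(k+2) = y^(2*k+4) := by rw [← pow_mul]; ring_nf
    nlinarith [this]
  have hterm : ∀ i ∈ range (k+2), 2*y^(k+1) ≤ (y^2)^i + (y^2)^(k+1-i) := by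
    intro i hi
    have hik : i ≤ k+1 := by simp at hi; omega
    have h : y^i * y^(k+1-i) = y^(k+1) := by rw [← pow_add]; congr 1; omega
    have := sq_nonneg (y^i - y^(k+1-i))
    have e1 : (y^2)^i = (y^i)^2 := by rw [← pow_mul, ← pow_mul]; ring_nf
    have e2 : (y^2)^(k+1-i) = (y^(k+1-i))^2 := by rw [← pow_mul, ← pow_mul]; ring_nf
    nlinarith
  have hstrict : 2*y^(k+1) < (y^2)^0 + (y^2)^(k+1-0) := by
    have hyk : y^(k+1) < 1 := pow_lt_one₀ h0 h1 (by omega)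
    have e2 : (y^2)^(k+1) = (y^(k+1))^2 := by rw [← pow_mul, ← pow_mul]; ring_nf
    have := sq_nonneg (1 - y^(k+1))
    simp only [pow_zero, Nat.sub_zero, e2]
    nlinarith
  have hsum : ∑ i ∈ range (k+2), (2*y^(k+1)) < ∑ i ∈ range (k+2), ((y^2)^i + (y^2)^(k+1-i)) := by
    refine Finset.sum_lt_sum hterm ⟨0, by simp, hstrict⟩
  have hrefl : ∑ i ∈ range (k+2), (y^2)^(k+1-i) = S := by
    have := Finset.sum_range_reflect (fun i => (y^2)^i) (k+2)
    simpa using this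
  rw [Finset.sum_add_distrib, hrefl, Finset.sum_const, card_range] at hsum
  rw [← hSdef, nsmul_eq_mul] at hsum
  have hSge : ((k:ℝ)+2) * y^(k+1) < S := by
    push_cast at hsum ⊢
    nlinarith
  have hy2 : 0 < 1 - y^2 := by nlinarith
  calc ((k:ℝ)+2)*y^(k+1)*(1-y^2) < S * (1-y^2) := by nlinarith
    _ = 1 - y^(2*k+4) := by rw [mul_comm]; exact hS

lemma aux34 (m : ℝ) (hm : 2 ≤ m) : ∀ k : ℕ, ((k:ℝ)+3)*(m-1) ≤ 3/4 * m^(k+2)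
  | 0 => by nlinarith [sq_nonneg (m-2)]
  | (k+1) => by
    have ih := aux34 m hm k
    have hpow : (0:ℝ) < m^(k+2) := by positivity
    push_cast
    calc ((k:ℝ)+1+3)*(m-1) ≤ 2*(((k:ℝ)+3)*(m-1)) := by nlinarith
      _ ≤ 2*(3/4*m^(k+2)) := by linarith
      _ ≤ m*(3/4*m^(k+2)) := by nlinarith
      _ = 3/4*m^(k+1+2) := by ring

lemma key_pos (e : ℝ) (he : 2 ≤ e) (he' : e = 2 ∨ 3 ≤ e) (k : ℕ) (z : ℝ)
    (hz1 : -(1/(e-1)) < z) (hz2 : z < 1) :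
    0 < 1 + ((k:ℝ)+2)*z^(k+1) + ((k:ℝ)+3)*(e-2)*z^(k+2)
        - ((k:ℝ)+2)*(e-1)*z^(k+3) - (e-1)*z^(2*k+4) := by
  have he1 : (0:ℝ) < e - 1 := by linarith
  have ha1 : 1/(e-1) ≤ 1 := by rw [div_le_one he1]; linarith
  have hk0 : (0:ℝ) ≤ (k:ℝ) := Nat.cast_nonneg k
  have he2 : (0:ℝ) ≤ e - 2 := by linarith
  rcases le_or_gt 0 z with hz0 | hz0
  · -- 0 ≤ z < 1
    have h1 : z^(2*k+4) < 1 := pow_lt_one₀ hz0 hz2 (by omega)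
    have hzk1 : 0 ≤ z^(k+1) := pow_nonneg hz0 _
    have hzk2 : 0 ≤ z^(k+2) := pow_nonneg hz0 _
    have hz21 : z^2 ≤ 1 := pow_le_one₀ hz0 hz2.le
    have hzk2le : z^(k+2) ≤ 1 := pow_le_one₀ hz0 hz2.le
    have h2 : 0 ≤ ((k:ℝ)+2)*z^(k+1)*(1-z^2) :=
      mul_nonneg (mul_nonneg (by linarith) hzk1) (by linarith)
    have h3 : 0 ≤ (e-2)*z^(k+2)*(((k:ℝ)+3) - ((k:ℝ)+2)*z - z^(k+2)) := by
      have hb : 0 ≤ ((k:ℝ)+3) - ((k:ℝ)+2)*z - z^(k+2) := by nlinarith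
      exact mul_nonneg (mul_nonneg he2 hzk2) hb
    have hid : 1 + ((k:ℝ)+2)*z^(k+1) + ((k:ℝ)+3)*(e-2)*z^(k+2)
        - ((k:ℝ)+2)*(e-1)*z^(k+3) - (e-1)*z^(2*k+4)
        = (1 - z^(2*k+4)) + ((k:ℝ)+2)*z^(k+1)*(1-z^2)
          + (e-2)*z^(k+2)*(((k:ℝ)+3) - ((k:ℝ)+2)*z - z^(k+2)) := by ring
    rw [hid]; linarith
  · -- z < 0
    obtain ⟨y, hy0, hz⟩ : ∃ y : ℝ, 0 < y ∧ z = -y := ⟨-z, by linarith, by ring⟩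
    subst hz
    have hya : y < 1/(e-1) := by linarith
    have hy1 : y < 1 := lt_of_lt_of_le hya ha1
    have hey : (e-1)*y < 1 := by
      have h := mul_lt_mul_of_pos_left hya he1
      rwa [mul_one_div, div_self he1.ne'] at h
    have hyk1 : 0 ≤ y^(k+1) := by positivity
    have hyk2 : 0 ≤ y^(k+2) := by positivity
    have hyk3 : 0 ≤ y^(k+3) := by positivity
    rcases Nat.even_or_odd k with hk | hk
    · -- k even : k+1 odd, k+2 even, k+3 odd
      have e1 : (-y)^(k+1) = -(y^(k+1)) := (hk.add_one).neg_pow y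
      have e2 : (-y)^(k+2) = y^(k+2) := by
        have : Even (k+2) := by rcases hk with ⟨t, ht⟩; exact ⟨t+1, by omega⟩
        exact this.neg_pow y
      have e3 : (-y)^(k+3) = -(y^(k+3)) := by
        have : Odd (k+3) := by rcases hk with ⟨t, ht⟩; exact ⟨t+1, by omega⟩
        exact this.neg_pow y
      have he4 : Even (2*k+4) := ⟨k+2, by omega⟩
      have e4 : (-y)^(2*k+4) = y^(2*k+4) := he4.neg_pow y
      rw [e1, e2, e3, e4]
      have hH := H_pos k y hy0.le hy1
      have hbr : y^(2*k+4) ≤ ((k:ℝ)+2)*y^(k+3) := by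
        have h1 : y^(k+1) ≤ 1 := pow_le_one₀ hy0.le hy1.le
        have h2 : y^(2*k+4) = y^(k+1)*y^(k+3) := by rw [← pow_add]; ring_nf
        nlinarith
      have hid : 1 + ((k:ℝ)+2)*(-(y^(k+1))) + ((k:ℝ)+3)*(e-2)*y^(k+2)
          - ((k:ℝ)+2)*(e-1)*(-(y^(k+3))) - (e-1)*y^(2*k+4)
          = ((1 - y^(2*k+4)) - ((k:ℝ)+2)*y^(k+1)*(1-y^2))
            + (e-2)*(((k:ℝ)+2)*y^(k+3) - y^(2*k+4))
            + ((k:ℝ)+3)*(e-2)*y^(k+2) := by ring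
      rw [hid]
      have t1 : 0 ≤ (e-2)*(((k:ℝ)+2)*y^(k+3) - y^(2*k+4)) :=
        mul_nonneg he2 (by linarith)
      have t2 : 0 ≤ ((k:ℝ)+3)*(e-2)*y^(k+2) :=
        mul_nonneg (mul_nonneg (by linarith) he2) hyk2
      linarith
    · -- k odd : k+1 even, k+2 odd, k+3 even
      have e1 : (-y)^(k+1) = y^(k+1) := (hk.add_one).neg_pow y
      have e2 : (-y)^(k+2) = -(y^(k+2)) := by
        have : Odd (k+2) := by rcases hk with ⟨t, ht⟩; exact ⟨t+1, by omega⟩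
        exact this.neg_pow y
      have e3 : (-y)^(k+3) = y^(k+3) := by
        have : Even (k+3) := by rcases hk with ⟨t, ht⟩; exact ⟨t+2, by omega⟩
        exact this.neg_pow y
      have he4 : Even (2*k+4) := ⟨k+2, by omega⟩
      have e4 : (-y)^(2*k+4) = y^(2*k+4) := he4.neg_pow y
      rw [e1, e2, e3, e4]
      -- goal: 0 < 1 + (k+2)y^{k+1} - (k+3)(e-2)y^{k+2} - (k+2)(e-1)y^{k+3} - (e-1)y^{2k+4}
      have t1 : 0 ≤ ((k:ℝ)+2)*y^(k+1)*(1-(e-1)*y^2) := by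
        apply mul_nonneg (mul_nonneg (by linarith) hyk1)
        nlinarith
      have t2 : 1 - ((k:ℝ)+3)*(e-2)*y^(k+2) - (e-1)*y^(2*k+4) > 0 := by
        rcases he' with h2 | h3
        · subst h2
          have : y^(2*k+4) < 1 := pow_lt_one₀ hy0.le hy1 (by omega)
          norm_num
          linarith
        · have hm2 : (2:ℝ) ≤ e-1 := by linarith
          have hm0 : (0:ℝ) < e-1 := by linarith
          have b1 : y^(k+2) < (1/(e-1))^(k+2) :=
            pow_lt_pow_left₀ hya hy0.le (by omega)
          have b2 : y^(2*k+4) < (1/(e-1))^(2*k+4) :=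
            pow_lt_pow_left₀ hya hy0.le (by omega)
          have c1 : ((k:ℝ)+3)*(e-2)*y^(k+2) < ((k:ℝ)+3)*(e-2)*(1/(e-1))^(k+2) := by
            have hc : (0:ℝ) < ((k:ℝ)+3)*(e-2) := mul_pos (by linarith) (by linarith)
            exact mul_lt_mul_of_pos_left b1 hc
          have c1' : ((k:ℝ)+3)*(e-2)*(1/(e-1))^(k+2) ≤ 3/4 := by
            have h34 := aux34 (e-1) hm2 k
            have hpow : (0:ℝ) < (e-1)^(k+2) := by positivity
            rw [div_pow, one_pow, mul_one_div, div_le_iff₀ hpow]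
            nlinarith
          have c2 : (e-1)*y^(2*k+4) < (e-1) * (1/(e-1))^(2*k+4) :=
            mul_lt_mul_of_pos_left b2 hm0
          have c2' : (e-1) * (1/(e-1))^(2*k+4) ≤ 1/8 := by
            have hstep : (e-1) * (1/(e-1))^(2*k+4) = (1/(e-1))^(2*k+3) := by
              rw [show 2*k+4 = (2*k+3)+1 by omega, pow_succ]
              field_simp
            rw [hstep]
            have hm12 : (1/(e-1) : ℝ) ≤ 1/2 := by
              rw [div_le_div_iff₀ hm0 (by norm_num)]; linarith
            have h1 : (1/(e-1):ℝ)^(2*k+3) ≤ (1/2:ℝ)^(2*k+3) :=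
              pow_le_pow_left₀ (by positivity) hm12 _
            have h2 : (1/2:ℝ)^(2*k+3) ≤ (1/2:ℝ)^3 :=
              pow_le_pow_of_le_one (by norm_num) (by norm_num) (by omega)
            have h3 : ((1:ℝ)/2)^3 = 1/8 := by norm_num
            linarith
          linarith
      have hid : 1 + ((k:ℝ)+2)*y^(k+1) + ((k:ℝ)+3)*(e-2)*(-(y^(k+2)))
          - ((k:ℝ)+2)*(e-1)*y^(k+3) - (e-1)*y^(2*k+4)
          = ((k:ℝ)+2)*y^(k+1)*(1-(e-1)*y^2)
            + (1 - ((k:ℝ)+3)*(e-2)*y^(k+2) - (e-1)*y^(2*k+4)) := by ring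
      rw [hid]
      linarith

lemma NDderiv (e : ℝ) (k : ℕ) (z : ℝ) (hD : 1 + (e-1)*z^(k+3) ≠ 0) :
    HasDerivAt (fun w : ℝ => (w + w^(k+2) + (e-2)*w^(k+3)) / (1 + (e-1)*w^(k+3)))
      ((1 + ((k:ℝ)+2)*z^(k+1) + ((k:ℝ)+3)*(e-2)*z^(k+2)
        - ((k:ℝ)+2)*(e-1)*z^(k+3) - (e-1)*z^(2*k+4)) / (1 + (e-1)*z^(k+3))^2) z := by
  have hN : HasDerivAt (fun w : ℝ => w + w^(k+2) + (e-2)*w^(k+3))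
      (1 + ((k:ℝ)+2)*z^(k+1) + (e-2)*(((k:ℝ)+3)*z^(k+2))) z := by
    have h := ((hasDerivAt_id z).add (hasDerivAt_pow (k+2) z)).add
      ((hasDerivAt_pow (k+3) z).const_mul (e-2))
    refine h.congr_deriv ?_
    have e1 : k+2-1 = k+1 := by omega
    have e2 : k+3-1 = k+2 := by omega
    rw [e1, e2]
    push_cast
    ring
  have hDd : HasDerivAt (fun w : ℝ => 1 + (e-1)*w^(k+3))
      ((e-1)*(((k:ℝ)+3)*z^(k+2))) z := by
    have h := (hasDerivAt_const z (1:ℝ)).add ((hasDerivAt_pow (k+3) z).const_mul (e-1))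
    refine h.congr_deriv ?_
    have e2 : k+3-1 = k+2 := by omega
    rw [e2]
    push_cast
    ring
  have h := hN.div hDd hD
  refine h.congr_deriv ?_
  have hnum : (1 + ((k:ℝ)+2)*z^(k+1) + (e-2)*(((k:ℝ)+3)*z^(k+2))) * (1 + (e-1)*z^(k+3))
      - (z + z^(k+2) + (e-2)*z^(k+3)) * ((e-1)*(((k:ℝ)+3)*z^(k+2)))
      = 1 + ((k:ℝ)+2)*z^(k+1) + ((k:ℝ)+3)*(e-2)*z^(k+2)
        - ((k:ℝ)+2)*(e-1)*z^(k+3) - (e-1)*z^(2*k+4) := by ring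
  rw [← hnum]

noncomputable def altSum (n : ℕ) (w : ℝ) : ℝ := ∑ i ∈ Finset.range n, (-w)^i
noncomputable def altSum' (n : ℕ) (w : ℝ) : ℝ :=
  ∑ i ∈ Finset.range n, ((i:ℝ) * (-w)^(i-1) * (-1))

lemma altSum_hasDerivAt (n : ℕ) (w : ℝ) : HasDerivAt (altSum n) (altSum' n w) w := by
  unfold altSum altSum'
  exact HasDerivAt.fun_sum (fun i _ => (hasDerivAt_neg w).fun_pow i)

@[fun_prop]
lemma altSum_continuous (n : ℕ) : Continuous (altSum n) := by
  unfold altSum; fun_prop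

@[fun_prop]
lemma altSum'_continuous (n : ℕ) : Continuous (altSum' n) := by
  unfold altSum'; fun_prop

lemma altSum_geom (n : ℕ) (hn : Odd n) (w : ℝ) : (1+w) * altSum n w = 1 + w^n := by
  have h := geom_sum_mul (-w) n
  rw [hn.neg_pow] at h
  unfold altSum
  linear_combination -h

lemma altSum_neg_one (n : ℕ) : altSum n (-1) = n := by
  unfold altSum; simp

lemma altSum_pos (k n : ℕ) (hn : Odd n) (hn0 : 0 < n) (w : ℝ) (hw1 : -1 ≤ w) (hw2 : w ≤ 1) :
    0 < altSum n w := by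
  rcases eq_or_lt_of_le hw1 with h | h
  · rw [← h, altSum_neg_one]
    exact_mod_cast hn0
  · have h1w : (0:ℝ) < 1 + w := by linarith
    have hwp : (0:ℝ) < 1 + w^n := by
      have h2 : (-1:ℝ)^n < w^n := by simpa using (Odd.strictMono_pow hn (R := ℝ)) h
      rw [hn.neg_one_pow] at h2
      linarith
    have hmul : 0 < (1+w) * altSum n w := by rw [altSum_geom n hn w]; exact hwp
    rcases mul_pos_iff.mp hmul with ⟨_, h2⟩ | ⟨h2, _⟩
    · exact h2
    · linarith

lemma caseB (k : ℕ) (hodd : Odd (k+3)) :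
    ∃ f' : ℝ → ℝ,
      ContinuousOn f' (Set.Icc (-1 : ℝ) 1) ∧
      (∀ z ∈ Set.Icc (-1 : ℝ) 1,
        HasDerivWithinAt (zetaF 2 (k+3)) (f' z) (Set.Icc (-1:ℝ) 1) z) ∧
      (∀ z ∈ Set.Ioo (-1:ℝ) 1, 0 < f' z) := by
  have hodd1 : Odd (k+1) := by
    rcases hodd with ⟨t, ht⟩; exact ⟨t-1, by omega⟩
  have hBpos : ∀ w ∈ Set.Icc (-1:ℝ) 1, 0 < altSum (k+3) w :=
    fun w hw => altSum_pos k (k+3) hodd (by omega) w hw.1 hw.2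
  -- the rational representative
  set g : ℝ → ℝ := fun w => w * altSum (k+1) w / altSum (k+3) w with hgdef
  set f' : ℝ → ℝ := fun w =>
    ((1 * altSum (k+1) w + w * altSum' (k+1) w) * altSum (k+3) w
      - w * altSum (k+1) w * altSum' (k+3) w) / (altSum (k+3) w)^2 with hf'def
  have hg : ∀ w : ℝ, altSum (k+3) w ≠ 0 → HasDerivAt g (f' w) w := fun w hw =>
    ((hasDerivAt_id w).mul (altSum_hasDerivAt (k+1) w)).div (altSum_hasDerivAt (k+3) w) hw
  -- zetaF = g on the interval
  have hEq : ∀ w ∈ Set.Icc (-1:ℝ) 1, zetaF 2 (k+3) w = g w := by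
    intro w hw
    by_cases hw1 : w = -1
    · subst hw1
      rw [zetaF, if_pos ⟨rfl, hodd, rfl⟩, hgdef]
      simp only [altSum_neg_one]
      have h3 : ((k:ℝ)+3) ≠ 0 := by positivity
      push_cast
      field_simp
      ring
    · rw [zetaF, if_neg (by tauto), show k+3-1 = k+2 by omega, hgdef]
      have hDw : (0:ℝ) < 1 + (((2:ℕ):ℝ)-1)*w^(k+3) := by
        push_cast
        have hw3 : -1 < w^(k+3) := by
          have h : (-1:ℝ)^(k+3) < w^(k+3) := by
            simpa using (Odd.strictMono_pow hodd (R := ℝ)) (lt_of_le_of_ne hw.1 (Ne.symm hw1))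
          rw [hodd.neg_one_pow] at h
          linarith
        linarith
      have hBw : (0:ℝ) < altSum (k+3) w := hBpos w hw
      rw [div_eq_div_iff hDw.ne' hBw.ne']
      have h1w : (1:ℝ)+w ≠ 0 := fun h => hw1 (by linarith [eq_neg_of_add_eq_zero_left h])
      apply mul_left_cancel₀ h1w
      have hga := altSum_geom (k+1) hodd1 w
      have hgb := altSum_geom (k+3) hodd w
      push_cast
      linear_combination (w + w^(k+2) + ((2:ℝ)-2)*w^(k+3)) * hgb
        - (w*(1 + ((2:ℝ)-1)*w^(k+3))) * hga
  refine ⟨f', ?_, ?_, ?_⟩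
  · apply ContinuousOn.div
    · fun_prop
    · fun_prop
    · exact fun w hw => pow_ne_zero 2 (hBpos w hw).ne'
  · intro z hz
    exact ((hg z (hBpos z hz).ne').hasDerivWithinAt).congr hEq (hEq z hz)
  · rintro z ⟨hz1, hz2⟩
    have hD : (0:ℝ) < 1 + ((2:ℝ)-1)*z^(k+3) := by
      have hz3 : -1 < z^(k+3) := by
        have h : (-1:ℝ)^(k+3) < z^(k+3) := by
          simpa using (Odd.strictMono_pow hodd (R := ℝ)) hz1
        rw [hodd.neg_one_pow] at h
        linarith
      linarith
    have h2 := NDderiv 2 k z hD.ne'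
    have hnhds : Set.Ioo (-1:ℝ) 1 ∈ nhds z := Ioo_mem_nhds hz1 hz2
    have hEqNhd : g =ᶠ[nhds z]
        (fun w : ℝ => (w + w^(k+2) + ((2:ℝ)-2)*w^(k+3)) / (1 + ((2:ℝ)-1)*w^(k+3))) := by
      apply Filter.eventuallyEq_of_mem hnhds
      intro w hw
      have hBw : (0:ℝ) < altSum (k+3) w := hBpos w ⟨hw.1.le, hw.2.le⟩
      have hDw : (0:ℝ) < 1 + ((2:ℝ)-1)*w^(k+3) := by
        have hw3 : -1 < w^(k+3) := by
          have h : (-1:ℝ)^(k+3) < w^(k+3) := by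
            simpa using (Odd.strictMono_pow hodd (R := ℝ)) hw.1
          rw [hodd.neg_one_pow] at h
          linarith
        linarith
      have h1w : (1:ℝ)+w ≠ 0 := by nlinarith [hw.1]
      rw [hgdef]
      simp only
      rw [div_eq_div_iff hBw.ne' hDw.ne']
      apply mul_left_cancel₀ h1w
      have hga := altSum_geom (k+1) hodd1 w
      have hgb := altSum_geom (k+3) hodd w
      linear_combination (w*(1 + ((2:ℝ)-1)*w^(k+3))) * hga
        - (w + w^(k+2) + ((2:ℝ)-2)*w^(k+3)) * hgb
    have h3 : HasDerivAt g ((1 + ((k:ℝ)+2)*z^(k+1) + ((k:ℝ)+3)*((2:ℝ)-2)*z^(k+2)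
        - ((k:ℝ)+2)*((2:ℝ)-1)*z^(k+3) - ((2:ℝ)-1)*z^(2*k+4)) / (1 + ((2:ℝ)-1)*z^(k+3))^2) z :=
      h2.congr_of_eventuallyEq hEqNhd
    have hBz : (0:ℝ) < altSum (k+3) z := hBpos z ⟨hz1.le, hz2.le⟩
    have huniq := (hg z hBz.ne').unique h3
    rw [huniq]
    apply div_pos
    · exact key_pos 2 (by norm_num) (Or.inl rfl) k z (by norm_num; linarith) hz2
    · exact pow_pos hD 2

lemma caseA (q k : ℕ) (hq : 2 ≤ q) (hC : ¬(q = 2 ∧ Odd (k+3))) :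
    ∃ f' : ℝ → ℝ,
      ContinuousOn f' (Set.Icc (-(1 / ((q : ℝ) - 1))) 1) ∧
      (∀ z ∈ Set.Icc (-(1 / ((q : ℝ) - 1))) 1,
        HasDerivWithinAt (zetaF q (k+3)) (f' z) (Set.Icc (-(1 / ((q : ℝ) - 1))) 1) z) ∧
      (∀ z ∈ Set.Ioo (-(1 / ((q : ℝ) - 1))) 1, 0 < f' z) := by
  have he : (2:ℝ) ≤ (q:ℝ) := by exact_mod_cast hq
  have he1 : (0:ℝ) < (q:ℝ) - 1 := by linarith
  have he' : (q:ℝ) = 2 ∨ 3 ≤ (q:ℝ) := by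
    rcases Nat.lt_or_ge q 3 with h | h
    · left; have : q = 2 := by omega
      rw [this]; norm_num
    · right; exact_mod_cast h
  -- positivity of denominator on the interval
  have hDpos : ∀ z ∈ Set.Icc (-(1 / ((q : ℝ) - 1))) 1, 0 < 1 + ((q:ℝ)-1)*z^(k+3) := by
    rintro z ⟨hz1, hz2⟩
    rcases le_or_gt 0 z with h0 | h0
    · have : 0 ≤ ((q:ℝ)-1)*z^(k+3) := mul_nonneg (by linarith) (pow_nonneg h0 _)
      linarith
    · rcases he' with h2 | h3
      · -- q = 2 : then k+3 even
        have hq2 : q = 2 := by exact_mod_cast h2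
        have hkev : Even (k+3) := by
          rcases Nat.even_or_odd (k+3) with h | h
          · exact h
          · exact absurd ⟨hq2, h⟩ hC
        have hzp : 0 ≤ z^(k+3) := hkev.pow_nonneg z
        have : 0 ≤ ((q:ℝ)-1)*z^(k+3) := mul_nonneg (by linarith) hzp
        linarith
      · -- q ≥ 3
        have ha2 : 1/((q:ℝ)-1) ≤ 1/2 := by
          rw [div_le_div_iff₀ he1 (by norm_num)]; linarith
        have hza : |z| ≤ 1/((q:ℝ)-1) := by
          rw [abs_le]; constructor
          · linarith
          · linarith [div_nonneg (le_of_lt one_pos : (0:ℝ) ≤ 1) he1.le]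
        have h1 : |z^(k+3)| ≤ (1/((q:ℝ)-1))^(k+3) := by
          rw [abs_pow]; exact pow_le_pow_left₀ (abs_nonneg z) hza _
        have h2 : ((q:ℝ)-1)*(1/((q:ℝ)-1))^(k+3) = (1/((q:ℝ)-1))^(k+2) := by
          rw [show k+3 = (k+2)+1 by omega, pow_succ]
          field_simp
        have h3' : (1/((q:ℝ)-1):ℝ)^(k+2) ≤ (1/2:ℝ)^(k+2) :=
          pow_le_pow_left₀ (by positivity) ha2 _
        have h4 : ((1:ℝ)/2)^(k+2) ≤ ((1:ℝ)/2)^1 :=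
          pow_le_pow_of_le_one (by norm_num) (by norm_num) (by omega)
        norm_num at h4
        have h5 : ((q:ℝ)-1)*z^(k+3) ≥ -(1/2) := by
          have := (abs_le.mp h1).1
          nlinarith
        linarith
  -- zetaF agrees with the rational function everywhere
  have hEq : ∀ z : ℝ, zetaF q (k+3) z
      = (z + z^(k+2) + ((q:ℝ)-2)*z^(k+3)) / (1 + ((q:ℝ)-1)*z^(k+3)) := by
    intro z
    rw [zetaF, if_neg (by tauto), show k+3-1 = k+2 by omega]
  refine ⟨fun z => (1 + ((k:ℝ)+2)*z^(k+1) + ((k:ℝ)+3)*((q:ℝ)-2)*z^(k+2)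
        - ((k:ℝ)+2)*((q:ℝ)-1)*z^(k+3) - ((q:ℝ)-1)*z^(2*k+4)) / (1 + ((q:ℝ)-1)*z^(k+3))^2,
    ?_, ?_, ?_⟩
  · apply ContinuousOn.div
    · fun_prop
    · fun_prop
    · exact fun z hz => pow_ne_zero 2 (hDpos z hz).ne'
  · intro z hz
    exact ((NDderiv (q:ℝ) k z (hDpos z hz).ne').hasDerivWithinAt).congr
      (fun w _ => hEq w) (hEq z)
  · rintro z ⟨hz1, hz2⟩
    apply div_pos (key_pos (q:ℝ) he he' k z hz1 hz2)
    exact pow_pos (hDpos z ⟨hz1.le, hz2.le⟩) 2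

/-- For `q ≥ 2` and `d ≥ 3`, `ζ_{q,d}` is continuously differentiable on
`[−1/(q−1), 1]` and its derivative is strictly positive on `(−1/(q−1), 1)`. -/
theorem zetaF_contDiff_and_deriv_pos (q d : ℕ) (hq : 2 ≤ q) (hd : 3 ≤ d) :
    ∃ f' : ℝ → ℝ,
      ContinuousOn f' (Set.Icc (-(1 / ((q : ℝ) - 1))) 1) ∧
      (∀ z ∈ Set.Icc (-(1 / ((q : ℝ) - 1))) 1,
        HasDerivWithinAt (zetaF q d) (f' z) (Set.Icc (-(1 / ((q : ℝ) - 1))) 1) z) ∧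
      (∀ z ∈ Set.Ioo (-(1 / ((q : ℝ) - 1))) 1, 0 < f' z) := by
  obtain ⟨k, rfl⟩ : ∃ k, d = k + 3 := ⟨d - 3, by omega⟩
  by_cases hC : q = 2 ∧ Odd (k+3)
  · obtain ⟨rfl, hodd⟩ := hC
    have hset : -(1 / (((2:ℕ) : ℝ) - 1)) = (-1:ℝ) := by norm_num
    rw [hset]
    exact caseB k hodd
  · exact caseA q k hq hC
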